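/- Let ι be a finite set of feature indices with |ι| = n ≥ 1, g : Finset ι → ℝ a set function, and μ its Harsanyi dividends μ(L) = ∑_{S ⊆ L} (-1)^{|L|-|S|} g(S). Then for every feature I ∈ ι, the query relevance of the presence of I with weight vector η(L) = 1/|L| coincides with the Shapley value of I: ∑_{L ⊆ ι, I ∈ L} μ(L)/|L| = ∑_{S ⊆ ι \ {I}} (|S|! · (n − 1 − |S|)! / n!) · (g(S ∪ {I}) − g(S)). -/

import Mathlib

noncomputable def A (m s : ℕ) : ℝ :=
  ∑ k ∈ Finset.range (m+1), (-1:ℝ)^k * (m.choose k) / (s+k)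

lemma hA_aux (m s : ℕ) :
    A m s = 1/(s:ℝ) - ∑ k ∈ Finset.range m, (-1:ℝ)^k * (m.choose (k+1)) / ((s:ℝ)+1+k) := by
  rw [A, Finset.sum_range_succ']
  have h1 : ∀ k : ℕ, (-1:ℝ)^(k+1) * (m.choose (k+1)) / ((s:ℝ)+((k:ℝ)+1))
      = -((-1:ℝ)^k * (m.choose (k+1)) / ((s:ℝ)+1+k)) := by
    intro k; ring
  push_cast
  simp_rw [h1]
  rw [Finset.sum_neg_distrib]
  simp [Nat.choose_zero_right]
  ring

lemma A_succ (m s : ℕ) : A (m+1) s = A m s - A m (s+1) := by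
  rw [A, Finset.sum_range_succ']
  have h1 : ∀ k : ℕ, (-1:ℝ)^(k+1) * ((m+1).choose (k+1)) / ((s:ℝ)+((k:ℝ)+1))
      = -((-1:ℝ)^k * (m.choose k) / (((s:ℝ)+1)+k))
        - ((-1:ℝ)^k * (m.choose (k+1)) / ((s:ℝ)+1+k)) := by
    intro k
    rw [Nat.choose_succ_succ]
    push_cast
    ring
  push_cast
  simp_rw [h1]
  rw [Finset.sum_sub_distrib, Finset.sum_neg_distrib]
  have h2 : ∑ k ∈ Finset.range (m+1), (-1:ℝ)^k * (m.choose (k+1)) / ((s:ℝ)+1+k)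
      = ∑ k ∈ Finset.range m, (-1:ℝ)^k * (m.choose (k+1)) / ((s:ℝ)+1+k) := by
    rw [Finset.sum_range_succ, Nat.choose_succ_self]
    simp
  rw [h2]
  have h3 := hA_aux m s
  have h4 : A m (s+1) = ∑ k ∈ Finset.range (m+1), (-1:ℝ)^k * (m.choose k) / (((s:ℝ)+1)+k) := by
    rw [A]; push_cast; rfl
  rw [← h4, h3]
  simp [Nat.choose_zero_right]
  ring

lemma A_eq (m s : ℕ) (hs : 1 ≤ s) :
    A m s = (Nat.factorial (s-1) : ℝ) * (Nat.factorial m) / (Nat.factorial (s+m)) := by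
  induction m generalizing s with
  | zero =>
    simp [A]
    have h2 : (s-1) + 1 = s := Nat.succ_pred_eq_of_pos hs
    have hsf : (Nat.factorial s : ℝ) = s * Nat.factorial (s-1) := by
      rw [← h2, Nat.factorial_succ, h2]; push_cast; rfl
    rw [hsf]
    have : ((s-1).factorial : ℝ) ≠ 0 := by positivity
    have : (s:ℝ) ≠ 0 := by positivity
    field_simp
  | succ m ih =>
    rw [A_succ, ih s hs, ih (s+1) (by omega)]
    have h1 : s + 1 - 1 = s := by omega
    have h2 : (s-1) + 1 = s := Nat.succ_pred_eq_of_pos hs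
    rw [h1]
    have e1 : s + (m+1) = (s+m) + 1 := by ring
    have e2 : s + 1 + m = (s+m) + 1 := by ring
    rw [e1, e2, Nat.factorial_succ (s+m), Nat.factorial_succ m]
    have hsf : (Nat.factorial s : ℝ) = s * Nat.factorial (s-1) := by
      rw [← h2, Nat.factorial_succ, h2]; push_cast; rfl
    rw [hsf]
    have hne1 : ((s+m).factorial : ℝ) ≠ 0 := by positivity
    have hne2 : ((s:ℝ)+m+1) ≠ 0 := by positivity
    field_simp
    push_cast
    ring

lemma coeff_sum {ι : Type*} [Fintype ι] [DecidableEq ι] (S : Finset ι) :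
    ∑ L ∈ Finset.univ.filter (fun L => S ⊆ L), (-1:ℝ)^(L.card - S.card) / (L.card : ℝ)
      = A (Fintype.card ι - S.card) S.card := by
  have h1 : ∑ L ∈ Finset.univ.filter (fun L => S ⊆ L), (-1:ℝ)^(L.card - S.card) / (L.card : ℝ)
      = ∑ T ∈ Sᶜ.powerset, (-1:ℝ)^T.card / ((S.card : ℝ) + T.card) := by
    refine Finset.sum_nbij' (i := fun L => L \ S) (j := fun T => S ∪ T) ?_ ?_ ?_ ?_ ?_
    · intro L hL
      simp only [Finset.mem_filter, Finset.mem_univ, true_and] at hL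
      simp only [Finset.mem_powerset]
      intro x hx
      simp only [Finset.mem_sdiff] at hx
      simp [Finset.mem_compl, hx.2]
    · intro T hT; simp [Finset.subset_union_left]
    · intro L hL
      simp only [Finset.mem_filter, Finset.mem_univ, true_and] at hL
      exact Finset.union_sdiff_of_subset hL
    · intro T hT
      simp only [Finset.mem_powerset] at hT
      show (S ∪ T) \ S = T
      rw [Finset.union_sdiff_cancel_left]
      rw [Finset.disjoint_left]
      intro a ha haT
      exact (Finset.mem_compl.mp (hT haT)) ha
    · intro L hL
      simp only [Finset.mem_filter, Finset.mem_univ, true_and] at hL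
      rw [Finset.card_sdiff_of_subset hL]
      congr 1
      rw [← Nat.cast_add, Nat.add_sub_cancel' (Finset.card_le_card hL)]
  rw [h1, Finset.sum_powerset]
  have hc : Sᶜ.card = Fintype.card ι - S.card := by
    rw [Finset.card_compl]
  rw [A, ← hc]
  refine Finset.sum_congr rfl fun k hk => ?_
  have hco : ∀ T ∈ Finset.powersetCard k Sᶜ,
      (-1:ℝ)^T.card / ((S.card:ℝ)+(T.card:ℝ)) = (-1:ℝ)^k / ((S.card:ℝ)+(k:ℝ)) := by
    intro T hT; rw [Finset.mem_powersetCard] at hT; rw [hT.2]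
  rw [Finset.sum_congr rfl hco, Finset.sum_const, nsmul_eq_mul, Finset.card_powersetCard, hc]
  ring

lemma c_mem {ι : Type*} [Fintype ι] [DecidableEq ι] (I : ι) (S : Finset ι) (hI : I ∈ S) :
    ∑ L ∈ Finset.univ.filter (fun L => I ∈ L ∧ S ⊆ L), (-1:ℝ)^(L.card - S.card)/(L.card:ℝ)
      = ((S.card - 1).factorial : ℝ) * ((Fintype.card ι - S.card).factorial : ℝ)
          / ((Fintype.card ι).factorial : ℝ) := by
  have hfe : Finset.univ.filter (fun L => I ∈ L ∧ S ⊆ L)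
      = Finset.univ.filter (fun L : Finset ι => S ⊆ L) := by
    ext L
    simp only [Finset.mem_filter, Finset.mem_univ, true_and]
    exact ⟨fun h => h.2, fun h => ⟨h hI, h⟩⟩
  rw [hfe, coeff_sum, A_eq _ _ (Finset.card_pos.mpr ⟨I, hI⟩)]
  have hle : S.card ≤ Fintype.card ι := by
    simpa using Finset.card_le_univ S
  rw [Nat.add_sub_cancel' hle]

lemma c_notmem {ι : Type*} [Fintype ι] [DecidableEq ι] (I : ι) (S : Finset ι) (hI : I ∉ S) :
    ∑ L ∈ Finset.univ.filter (fun L => I ∈ L ∧ S ⊆ L), (-1:ℝ)^(L.card - S.card)/(L.card:ℝ)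
      = -((S.card.factorial : ℝ) * ((Fintype.card ι - 1 - S.card).factorial : ℝ)
          / ((Fintype.card ι).factorial : ℝ)) := by
  have hfe : Finset.univ.filter (fun L => I ∈ L ∧ S ⊆ L)
      = Finset.univ.filter (fun L : Finset ι => insert I S ⊆ L) := by
    ext L
    simp [Finset.insert_subset_iff]
  rw [hfe]
  have hcI : (insert I S).card = S.card + 1 := Finset.card_insert_of_notMem hI
  have hterm : ∀ L ∈ Finset.univ.filter (fun L : Finset ι => insert I S ⊆ L),
      (-1:ℝ)^(L.card - S.card)/(L.card:ℝ) = -((-1:ℝ)^(L.card - (insert I S).card)/(L.card:ℝ)) := by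
    intro L hL
    simp only [Finset.mem_filter, Finset.mem_univ, true_and] at hL
    have hle : S.card + 1 ≤ L.card := hcI ▸ Finset.card_le_card hL
    have he : L.card - S.card = (L.card - (insert I S).card) + 1 := by omega
    rw [he, pow_succ]
    ring
  rw [Finset.sum_congr rfl hterm, Finset.sum_neg_distrib, coeff_sum, hcI,
    A_eq _ _ (by omega)]
  have hle : S.card + 1 ≤ Fintype.card ι := by
    have := Finset.card_le_univ (insert I S)
    simpa [hcI] using this
  have e1 : S.card + 1 - 1 = S.card := by omega
  have e2 : Fintype.card ι - (S.card + 1) = Fintype.card ι - 1 - S.card := by omega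
  have e3 : S.card + 1 + (Fintype.card ι - (S.card + 1)) = Fintype.card ι := by omega
  rw [e1, e3, e2]



/-- The query relevance of the presence of feature `I` with
weight vector `η L = 1/|L|` coincides with the Shapley value of `I` for the
game `g`. -/
theorem presence_relevance_eq_shapley_value
    {ι : Type*} [Fintype ι] [DecidableEq ι]
    (n : ℕ) (hn : 1 ≤ n) (hcard : Fintype.card ι = n)
    (g μ : Finset ι → ℝ)
    (hμ : ∀ L : Finset ι,
      μ L = ∑ S ∈ L.powerset, (-1 : ℝ) ^ (L.card - S.card) * g S)
    (I : ι) :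
    ∑ L ∈ Finset.univ.filter (fun L : Finset ι => I ∈ L), μ L / (L.card : ℝ)
      = ∑ S ∈ (Finset.univ \ {I} : Finset ι).powerset,
          ((S.card.factorial : ℝ) * ((n - 1 - S.card).factorial : ℝ)
              / (n.factorial : ℝ))
            * (g (S ∪ {I}) - g S) := by
  classical
  subst hcard
  set n := Fintype.card ι with hn'
  -- Step 1: expand μ and swap sums
  have step1 : ∑ L ∈ Finset.univ.filter (fun L : Finset ι => I ∈ L), μ L / (L.card : ℝ)
      = ∑ S ∈ (Finset.univ : Finset ι).powerset,
          g S * ∑ L ∈ Finset.univ.filter (fun L => I ∈ L ∧ S ⊆ L),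
            (-1:ℝ)^(L.card - S.card)/(L.card:ℝ) := by
    calc ∑ L ∈ Finset.univ.filter (fun L : Finset ι => I ∈ L), μ L / (L.card : ℝ)
        = ∑ L ∈ Finset.univ.filter (fun L : Finset ι => I ∈ L),
            ∑ S ∈ L.powerset, ((-1:ℝ)^(L.card - S.card) * g S)/(L.card:ℝ) := by
          simp_rw [hμ, Finset.sum_div]
      _ = ∑ S ∈ (Finset.univ : Finset ι).powerset,
            ∑ L ∈ Finset.univ.filter (fun L => I ∈ L ∧ S ⊆ L),
              ((-1:ℝ)^(L.card - S.card) * g S)/(L.card:ℝ) := by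
          refine Finset.sum_comm' ?_
          intro L S
          simp only [Finset.mem_filter, Finset.mem_univ, true_and, Finset.mem_powerset]
          constructor
          · rintro ⟨h1, h2⟩; exact ⟨⟨h1, h2⟩, Finset.subset_univ S⟩
          · rintro ⟨⟨h1, h2⟩, _⟩; exact ⟨h1, h2⟩
      _ = _ := by
          refine Finset.sum_congr rfl fun S _ => ?_
          rw [Finset.mul_sum]
          exact Finset.sum_congr rfl fun L _ => by ring
  rw [step1, ← Finset.sum_filter_add_sum_filter_not
    (Finset.univ : Finset ι).powerset (fun S => I ∈ S)]
  -- part with I ∈ S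
  have partA : ∑ S ∈ (Finset.univ : Finset ι).powerset.filter (fun S => I ∈ S),
        g S * ∑ L ∈ Finset.univ.filter (fun L => I ∈ L ∧ S ⊆ L),
          (-1:ℝ)^(L.card - S.card)/(L.card:ℝ)
      = ∑ T ∈ (Finset.univ \ {I} : Finset ι).powerset,
          ((T.card.factorial : ℝ) * ((n - 1 - T.card).factorial : ℝ) / (n.factorial : ℝ))
            * g (T ∪ {I}) := by
    refine Finset.sum_nbij' (i := fun S => S.erase I) (j := fun T => insert I T) ?_ ?_ ?_ ?_ ?_
    · intro S hS
      simp only [Finset.mem_filter, Finset.mem_powerset] at hS ⊢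
      intro x hx
      simp only [Finset.mem_erase] at hx
      simp [Finset.mem_sdiff, hx.1]
    · intro T hT
      simp only [Finset.mem_powerset] at hT
      simp only [Finset.mem_filter, Finset.mem_powerset]
      exact ⟨Finset.subset_univ _, Finset.mem_insert_self I T⟩
    · intro S hS
      simp only [Finset.mem_filter] at hS
      exact Finset.insert_erase hS.2
    · intro T hT
      simp only [Finset.mem_powerset] at hT
      apply Finset.erase_insert
      intro hIT
      have := hT hIT
      simp at this
    · intro S hS
      simp only [Finset.mem_filter, Finset.mem_powerset] at hS
      rw [c_mem I S hS.2]
      have h1 : (S.erase I).card = S.card - 1 := Finset.card_erase_of_mem hS.2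
      have hpos : 1 ≤ S.card := Finset.card_pos.mpr ⟨I, hS.2⟩
      have h2 : S.erase I ∪ {I} = S := by
        ext x
        simp only [Finset.mem_union, Finset.mem_erase, Finset.mem_singleton]
        constructor
        · rintro (⟨_, h⟩ | rfl); exact h; exact hS.2
        · intro hx
          by_cases hxI : x = I
          · right; exact hxI
          · left; exact ⟨hxI, hx⟩
      have h3 : n - 1 - (S.card - 1) = n - S.card := by
        have : S.card ≤ n := by simpa using Finset.card_le_univ S
        omega
      rw [h1, h2, h3]
      ring
  -- part with I ∉ S
  have hps : (Finset.univ : Finset ι).powerset.filter (fun S => ¬ I ∈ S)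
      = (Finset.univ \ {I} : Finset ι).powerset := by
    ext S
    simp [Finset.subset_sdiff, Finset.disjoint_singleton_right]
  have partB : ∑ S ∈ (Finset.univ : Finset ι).powerset.filter (fun S => ¬ I ∈ S),
        g S * ∑ L ∈ Finset.univ.filter (fun L => I ∈ L ∧ S ⊆ L),
          (-1:ℝ)^(L.card - S.card)/(L.card:ℝ)
      = ∑ S ∈ (Finset.univ \ {I} : Finset ι).powerset,
          -(((S.card.factorial : ℝ) * ((n - 1 - S.card).factorial : ℝ) / (n.factorial : ℝ))
            * g S) := by
    rw [hps]
    refine Finset.sum_congr rfl fun S hS => ?_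
    have hIS : I ∉ S := by
      simp only [Finset.mem_powerset] at hS
      intro h
      have := hS h
      simp at this
    rw [c_notmem I S hIS]
    ring
  rw [partA, partB, ← Finset.sum_add_distrib]
  refine Finset.sum_congr rfl fun S _ => ?_
  ring
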